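/- In R₂, the element u = s + t is transcendental over ℤ: no nonzero integer polynomial without constant term vanishes at s + t. -/

import Mathlib

/-!
The tree-indexed vector space `V` over `ℚ` with basis the free monoid on two letters
(encoded as `List Bool`, with `false` the letter `0` and `true` the letter `1`).
The recursive matrices `s = [[0,0],[1,0]]` and `t = [[0,t],[0,s]]` of the ring `R₂`
act on the decomposition `V = ℚ·φ ⊕ 0V ⊕ 1V` by the block-matrix recursion.
-/

noncomputable section

abbrev V : Type := List Bool →₀ ℚ

/-- Prefixing by a letter: the embedding `V → yV`. -/
def pre (b : Bool) : V →ₗ[ℚ] V := Finsupp.lmapDomain ℚ ℚ (List.cons b)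

/-- Value of `s = [[0,0],[1,0]]` on a basis word. -/
def Sfun : List Bool → V
  | [] => 0
  | false :: u => Finsupp.single (true :: u) 1
  | true :: _ => 0

/-- Value of `t = [[0,t],[0,s]]` on a basis word, by recursion. -/
def Tfun : List Bool → V
  | [] => 0
  | false :: _ => 0
  | true :: u => pre false (Tfun u) + pre true (Sfun u)

/-- The generator `s` of `R₂`. -/
def sR : Module.End ℚ V := Finsupp.linearCombination ℚ Sfun

/-- The generator `t` of `R₂`. -/
def tR : Module.End ℚ V := Finsupp.linearCombination ℚ Tfun

/-- The level-preserving operator with block form `[[e,0,0],[0,A,B],[0,C,D]]` on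
`V = ℚ·φ ⊕ 0V ⊕ 1V`, written `e ⊕ [[A,B],[C,D]]`. -/
def blk (e : ℚ) (A B C D : Module.End ℚ V) : Module.End ℚ V :=
  Finsupp.linearCombination ℚ (fun w => match w with
    | [] => Finsupp.single ([] : List Bool) e
    | false :: u => pre false (A (Finsupp.single u 1)) + pre true (C (Finsupp.single u 1))
    | true :: u => pre false (B (Finsupp.single u 1)) + pre true (D (Finsupp.single u 1)))

/-- The monomial in `s, t` given by a word (`false ↦ s`, `true ↦ t`). -/
def mono (w : List Bool) : Module.End ℚ V :=
  (w.map (fun b => if b then tR else sR)).prod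

/-- The ring `R₂` generated by `s` and `t` (a non-unital subring of `End ℚ V`). -/
def R2 : NonUnitalSubring (Module.End ℚ V) := NonUnitalSubring.closure {sR, tR}

end

noncomputable section

/-- The partial map on words describing the action of `t` on basis vectors. -/
def Tw : List Bool → Option (List Bool)
  | [] => none
  | false :: _ => none
  | [true] => none
  | true :: false :: u => some (true :: true :: u)
  | true :: true :: u => (Tw (true :: u)).map (List.cons false)

/-- The partial map on words describing the action of `u = s + t` on basis vectors. -/
def Uw : List Bool → Option (List Bool)
  | [] => none
  | false :: u => some (true :: u)
  | true :: u => Tw (true :: u)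

/-- Little-endian binary value of a word. -/
def val : List Bool → ℕ
  | [] => 0
  | b :: u => (cond b 1 0) + 2 * val u

lemma pre_single (b : Bool) (u : List Bool) :
    pre b (Finsupp.single u 1) = Finsupp.single (b :: u) 1 := by
  simp [pre, Finsupp.lmapDomain_apply, Finsupp.mapDomain_single]

lemma Tfun_eq (w : List Bool) :
    Tfun w = (Tw w).elim 0 (fun w' => Finsupp.single w' (1 : ℚ)) := by
  induction w with
  | nil => simp [Tfun, Tw]
  | cons b u ih =>
    cases b with
    | false => simp [Tfun, Tw]
    | true =>
      cases u with
      | nil => simp [Tfun, Tw, Sfun]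
      | cons b' u' =>
        cases b' with
        | false => simp [Tfun, Tw, Sfun, pre_single]
        | true =>
          rw [show Tfun (true :: true :: u') =
            pre false (Tfun (true :: u')) + pre true (Sfun (true :: u')) from rfl]
          rw [ih]
          rcases h : Tw (true :: u') with _ | w'
          · simp [h, Tw, Sfun]
          · simp [h, Tw, Sfun, pre_single]

lemma sR_single (w : List Bool) : sR (Finsupp.single w 1) = Sfun w := by
  simp [sR, Finsupp.linearCombination_single]

lemma tR_single (w : List Bool) : tR (Finsupp.single w 1) = Tfun w := by
  simp [tR, Finsupp.linearCombination_single]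

lemma uStep (w : List Bool) :
    (sR + tR) (Finsupp.single w 1) = (Uw w).elim 0 (fun w' => Finsupp.single w' (1 : ℚ)) := by
  rw [LinearMap.add_apply, sR_single, tR_single, Tfun_eq]
  cases w with
  | nil => simp [Sfun, Tw, Uw]
  | cons b u =>
    cases b with
    | false => simp [Sfun, Tw, Uw]
    | true => simp [Sfun, Uw]

/-- `n`-step orbit of the partial map `Uw`. -/
def orb : ℕ → List Bool → Option (List Bool)
  | 0, w => some w
  | n + 1, w => (orb n w).bind Uw

lemma pow_single (n : ℕ) (w : List Bool) :
    ((sR + tR) ^ n) (Finsupp.single w 1)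
      = (orb n w).elim 0 (fun w' => Finsupp.single w' (1 : ℚ)) := by
  induction n with
  | zero => simp [orb]
  | succ n ih =>
    rw [pow_succ', Module.End.mul_apply]
    rcases h : orb n w with _ | w'
    · rw [ih, h]
      simp [orb, h]
    · rw [ih, h]
      simp only [Option.elim]
      rw [uStep]
      show _ = (orb (n+1) w).elim 0 _
      rw [orb, h, Option.bind_some]

lemma Tw_val : ∀ w w', Tw w = some w' →
    val w < val w' ∧ val w' ≤ 2 * val w + 2 ∧ w'.length = w.length := by
  intro w
  induction w with
  | nil => intro w' h; simp [Tw] at h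
  | cons b u ih =>
    intro w' h
    cases b with
    | false => simp [Tw] at h
    | true =>
      cases u with
      | nil => simp [Tw] at h
      | cons b' u' =>
        cases b' with
        | false =>
          simp only [Tw] at h
          cases h
          simp [val]
          omega
        | true =>
          simp only [Tw, Option.map_eq_some_iff] at h
          obtain ⟨x, hx, rfl⟩ := h
          obtain ⟨h1, h2, h3⟩ := ih x hx
          refine ⟨?_, ?_, ?_⟩
          · simp only [val, Bool.cond_true, Bool.cond_false] at h1 h2 ⊢
            omega
          · simp only [val, Bool.cond_true, Bool.cond_false] at h1 h2 ⊢
            omega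
          · simp [h3]

lemma Uw_val : ∀ w w', Uw w = some w' →
    val w < val w' ∧ val w' ≤ 2 * val w + 2 ∧ w'.length = w.length := by
  intro w w' h
  cases w with
  | nil => simp [Uw] at h
  | cons b u =>
    cases b with
    | false =>
      simp only [Uw] at h
      cases h
      simp [val]
      omega
    | true => exact Tw_val _ _ h

lemma Tw_none_all_true : ∀ u, Tw (true :: u) = none → ∀ b ∈ u, b = true := by
  intro u
  induction u with
  | nil => intro _ b hb; simp at hb
  | cons b' u' ih =>
    intro h b hb
    cases b' with
    | false => simp [Tw] at h
    | true =>
      simp only [Tw, Option.map_eq_none_iff] at h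
      rw [List.mem_cons] at hb
      rcases hb with hb | hb
      · exact hb
      · exact ih h b hb

lemma Uw_none_all_true : ∀ w, Uw w = none → ∀ b ∈ w, b = true := by
  intro w h b hb
  cases w with
  | nil => simp at hb
  | cons b' u =>
    cases b' with
    | false => simp [Uw] at h
    | true =>
      rw [List.mem_cons] at hb
      rcases hb with hb | hb
      · exact hb
      · exact Tw_none_all_true u h b hb

lemma val_all_true : ∀ w : List Bool, (∀ b ∈ w, b = true) → val w + 1 = 2 ^ w.length := by
  intro w
  induction w with
  | nil => simp [val]
  | cons b u ih =>
    intro h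
    have hb : b = true := h b (by simp)
    have hu := ih (fun x hx => h x (by simp [hx]))
    subst hb
    simp only [val, List.length_cons, pow_succ, Bool.cond_true]
    omega

lemma val_replicate_false : ∀ N, val (List.replicate N false) = 0 := by
  intro N
  induction N with
  | zero => simp [val]
  | succ k ihk => simp [List.replicate_succ, val, ihk]

lemma orb_add : ∀ (m n : ℕ) (w : List Bool), orb (n + m) w = (orb n w).bind (orb m) := by
  intro m
  induction m with
  | zero => intro n w; cases h : orb n w <;> simp [orb, h]
  | succ m ih =>
    intro n w
    show orb ((n + m) + 1) w = _
    rw [orb, ih]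
    rcases h : orb n w with _ | x
    · simp
    · simp [orb]

lemma orb_val : ∀ (n : ℕ) (w w' : List Bool), orb n w = some w' → val w + n ≤ val w' := by
  intro n
  induction n with
  | zero => intro w w' h; simp [orb] at h; subst h; omega
  | succ n ih =>
    intro w w' h
    rw [orb, Option.bind_eq_some_iff] at h
    obtain ⟨x, hx, hU⟩ := h
    have h1 := ih w x hx
    have h2 := (Uw_val x w' hU).1
    omega

lemma surv : ∀ (n N : ℕ), n < N → ∃ w', orb n (List.replicate N false) = some w' ∧
    val w' + 2 ≤ 2 ^ (n + 1) ∧ w'.length = N := by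
  intro n
  induction n with
  | zero =>
    intro N _
    refine ⟨List.replicate N false, rfl, ?_, by simp⟩
    have := val_replicate_false N
    omega
  | succ n ih =>
    intro N hN
    obtain ⟨wn, hwn, hval, hlen⟩ := ih N (Nat.lt_of_succ_lt hN)
    rcases h : Uw wn with _ | w''
    · exfalso
      have hall := Uw_none_all_true wn h
      have := val_all_true wn hall
      rw [hlen] at this
      have h2 : 2 ^ (n + 2) ≤ 2 ^ N := Nat.pow_le_pow_right (by norm_num) (by omega)
      have h3 : (2:ℕ) ^ (n + 2) = 2 * 2 ^ (n + 1) := by ring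
      omega
    · obtain ⟨h1, h2, h3⟩ := Uw_val wn w'' h
      refine ⟨w'', ?_, ?_, by omega⟩
      · rw [orb, hwn]
        simp [h]
      · have : (2:ℕ) ^ (n + 2) = 2 * 2 ^ (n + 1) := by ring
        omega

/-- In `R₂` the element `u = s + t` is transcendental over `ℤ`: no nonzero integer
polynomial without constant term vanishes at `s + t`. -/
theorem s_add_t_transcendental (p : Polynomial ℤ) (h0 : p.coeff 0 = 0)
    (hp : Polynomial.aeval (sR + tR) p = 0) : p = 0 := by
  ext n
  rcases Nat.eq_zero_or_pos n with rfl | hn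
  · simpa using h0
  simp only [Polynomial.coeff_zero]
  by_cases hd : n ≤ p.natDegree
  swap
  · exact p.coeff_eq_zero_of_natDegree_lt (by omega)
  obtain ⟨wn, hwn, _, _⟩ := surv n (n + 1) (Nat.lt_succ_self n)
  set w0 : List Bool := List.replicate (n + 1) false with hw0
  have hexp : Polynomial.aeval (sR + tR) p
      = ∑ i ∈ Finset.range (p.natDegree + 1), p.coeff i • (sR + tR) ^ i :=
    Polynomial.aeval_eq_sum_range (sR + tR)
  rw [hexp] at hp
  have key := congrArg (fun f : Module.End ℚ V => (f (Finsupp.single w0 1)) wn) hp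
  simp only [LinearMap.zero_apply, Finsupp.coe_zero, Pi.zero_apply] at key
  rw [LinearMap.sum_apply] at key
  rw [Finsupp.finset_sum_apply] at key
  have hterm : ∀ i ∈ Finset.range (p.natDegree + 1), i ≠ n →
      ((p.coeff i • (sR + tR) ^ i) (Finsupp.single w0 1)) wn = 0 := by
    intro i _ hne
    rw [LinearMap.smul_apply, Finsupp.smul_apply, pow_single]
    rcases h : orb i w0 with _ | wi
    · simp
    · simp only [Option.elim]
      have hne' : wi ≠ wn := by
        intro hEq
        have hv : val wi = val wn := congrArg val hEq
        rcases Nat.lt_or_ge i n with hlt | hge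
        · have : orb n w0 = (orb i w0).bind (orb (n - i)) := by
            rw [← orb_add]
            congr 1
            omega
          rw [hwn, h] at this
          have := orb_val (n - i) wi wn this.symm
          omega
        · have hgt : n < i := by omega
          have : orb i w0 = (orb n w0).bind (orb (i - n)) := by
            rw [← orb_add]
            congr 1
            omega
          rw [h, hwn] at this
          have := orb_val (i - n) wn wi this.symm
          omega
      rw [Finsupp.single_apply]
      simp [hne']
  rw [Finset.sum_eq_single_of_mem n (Finset.mem_range.mpr (by omega)) hterm] at key
  rw [LinearMap.smul_apply, Finsupp.smul_apply, pow_single, hwn] at key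
  simp only [Option.elim, Finsupp.single_eq_same] at key
  have : ((p.coeff n : ℚ)) = 0 := by
    rw [zsmul_eq_mul, mul_one] at key
    exact key
  exact_mod_cast this

end
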